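/- Let C be the class of all Kripke frames consisting of a nonempty finite set I and a disjoint nonempty finite set F of worlds, with accessibility relation R the reflexive relation containing I×I and I×F and no other pairs (a finite cluster I of inner worlds below a finite antichain F of final worlds). Let F₂ ∈ C be the frame in which I has exactly two elements and F has exactly one element. Suppose L is any set of modal formulas such that (i) every formula satisfied at every world of every Kripke model based on a frame in C belongs to L, and (ii) every formula in L is satisfied at every world of every Kripke model based on F₂. Then L does not have the Lyndon interpolation property; that is, it is not the case that for all formulas φ, ψ with (φ→ψ)∈L there exists a formula θ with v⁺(θ)⊆v⁺(φ)∩v⁺(ψ), v⁻(θ)⊆v⁻(φ)∩v⁻(ψ), (φ→θ)∈L, and (θ→ψ)∈L. In particular, for distinct variables p, q, the formula (p∧□(□¬p∨p)) → □(p∨q∨□¬q) belongs to L but admits no such Lyndon interpolant θ. -/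

import Mathlib

/-- Modal formulas over countably many variables. -/
inductive ModalForm : Type where
  | var : ℕ → ModalForm
  | bot : ModalForm
  | and : ModalForm → ModalForm → ModalForm
  | or : ModalForm → ModalForm → ModalForm
  | not : ModalForm → ModalForm
  | imp : ModalForm → ModalForm → ModalForm
  | box : ModalForm → ModalForm

namespace ModalForm

mutual
  /-- positively occurring variables -/
  def vpos : ModalForm → Finset ℕ
    | var p => {p}
    | bot => ∅
    | and φ ψ => vpos φ ∪ vpos ψ
    | or φ ψ => vpos φ ∪ vpos ψ
    | not φ => vneg φ
    | imp φ ψ => vneg φ ∪ vpos ψ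
    | box φ => vpos φ
  /-- negatively occurring variables -/
  def vneg : ModalForm → Finset ℕ
    | var _ => ∅
    | bot => ∅
    | and φ ψ => vneg φ ∪ vneg ψ
    | or φ ψ => vneg φ ∪ vneg ψ
    | not φ => vpos φ
    | imp φ ψ => vpos φ ∪ vneg ψ
    | box φ => vneg φ
end

/-- Modal depth: maximal nesting of `□`. -/
def depth : ModalForm → ℕ
  | var _ => 0
  | bot => 0
  | and φ ψ => max (depth φ) (depth ψ)
  | or φ ψ => max (depth φ) (depth ψ)
  | not φ => depth φ
  | imp φ ψ => max (depth φ) (depth ψ)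
  | box φ => depth φ + 1

/-- `◇φ := ¬□¬φ` -/
def dia (φ : ModalForm) : ModalForm := not (box (not φ))

/-- `⊤ := ¬⊥` -/
def top : ModalForm := not bot

end ModalForm

/-- An S4 Kripke frame: nonempty set of worlds with a reflexive transitive relation. -/
structure KFrame : Type 1 where
  W : Type
  R : W → W → Prop
  nonempty : Nonempty W
  refl : ∀ x, R x x
  trans : ∀ x y z, R x y → R y z → R x z

/-- A Kripke model: a frame with a valuation. -/
structure KModel : Type 1 extends KFrame where
  val : W → ℕ → Prop

/-- The model based on frame `F` with valuation `V`. -/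
def KFrame.toModel (F : KFrame) (V : F.W → ℕ → Prop) : KModel :=
  { toKFrame := F, val := V }

/-- Satisfaction in a Kripke model. -/
def KModel.Sat (M : KModel) : M.W → ModalForm → Prop
  | w, .var p => M.val w p
  | _, .bot => False
  | w, .and φ ψ => M.Sat w φ ∧ M.Sat w ψ
  | w, .or φ ψ => M.Sat w φ ∨ M.Sat w ψ
  | w, .not φ => ¬ M.Sat w φ
  | w, .imp φ ψ => M.Sat w φ → M.Sat w ψ
  | w, .box φ => ∀ y, M.R w y → M.Sat y φ

/-- `(M0,w0) →ₙ^{(P⁺,P⁻)} (M1,w1)`: every `(P⁺,P⁻)`-formula of depth ≤ n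
satisfied at `(M0,w0)` is satisfied at `(M1,w1)`. -/
def ModalArrow (Pp Pm : Finset ℕ) (n : ℕ) (M0 : KModel) (w0 : M0.W)
    (M1 : KModel) (w1 : M1.W) : Prop :=
  ∀ φ : ModalForm, φ.vpos ⊆ Pp → φ.vneg ⊆ Pm → φ.depth ≤ n →
    M0.Sat w0 φ → M1.Sat w1 φ

/-- p-morphism between frames. -/
def PMorphism (F G : KFrame) (f : F.W → G.W) : Prop :=
  (∀ x y, F.R x y → G.R (f x) (f y)) ∧
  (∀ x w, G.R (f x) w → ∃ z, F.R x z ∧ f z = w)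

/-- The class `C` of Kripke models enjoys `n`-IP. -/
def EnjoysIP (C : Set KModel) (n : ℕ) : Prop :=
  ∀ (Pp Pm : Finset ℕ) (M0 M1 : KModel), M0 ∈ C → M1 ∈ C →
    ∀ (w0 : M0.W) (w1 : M1.W), ModalArrow Pp Pm n M0 w0 M1 w1 →
      ∃ (F : KFrame) (wstar : F.W) (f0 : F.W → M0.W) (f1 : F.W → M1.W),
        (∀ V : F.W → ℕ → Prop, F.toModel V ∈ C) ∧
        PMorphism F M0.toKFrame f0 ∧
        PMorphism F M1.toKFrame f1 ∧
        f0 wstar = w0 ∧ f1 wstar = w1 ∧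
        ∀ x : F.W, ModalArrow Pp Pm 0 M0 (f0 x) M1 (f1 x)

/-- A world is final iff every successor is also a predecessor. -/
def KModel.Final (M : KModel) (w : M.W) : Prop := ∀ y, M.R w y → M.R y w

/-- The cluster of a world. -/
def KModel.cluster (M : KModel) (w : M.W) : Set M.W := {u | M.R w u ∧ M.R u w}

/-- Cluster `C0` of `M0` matches cluster `C1` of `M1`. -/
def Matches (Pp Pm : Finset ℕ) (M0 M1 : KModel) (C0 : Set M0.W) (C1 : Set M1.W) : Prop :=
  (∀ u0 ∈ C0, ∃ u1 ∈ C1, ModalArrow Pp Pm 0 M0 u0 M1 u1) ∧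
  (∀ u1 ∈ C1, ∃ u0 ∈ C0, ModalArrow Pp Pm 0 M0 u0 M1 u1)

/-- `φ` is satisfied at every world of every model in `C`. -/
def ValidOn (C : Set KModel) (φ : ModalForm) : Prop :=
  ∀ M ∈ C, ∀ w : M.W, M.Sat w φ

/-- The class of Γ(LP₂,1,ω) frames: a finite cluster `I` of inner worlds below
a finite antichain `F` of final worlds. -/
def CFail : Set KFrame :=
  {Fr | Finite Fr.W ∧ ∃ I F : Set Fr.W, I.Nonempty ∧ F.Nonempty ∧ Disjoint I F ∧
    (∀ w : Fr.W, w ∈ I ∨ w ∈ F) ∧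
    ∀ u v : Fr.W, Fr.R u v ↔ (u = v ∨ (u ∈ I ∧ v ∈ I) ∨ (u ∈ I ∧ v ∈ F))}

/-- The frame of Γ(LS,1,2): the member of `CFail` with a two-element `I = {0,1}`
and a one-element `F = {2}`. -/
def LS12Frame : KFrame where
  W := Fin 3
  R := fun a b => a = b ∨ a.val ≤ 1
  nonempty := ⟨0⟩
  refl := fun _ => Or.inl rfl
  trans := fun x y z hxy hyz => by
    rcases hxy with rfl | h
    · exact hyz
    · exact Or.inr h

/-- `p ∧ □(□¬p ∨ p)` -/
def PhiF (p : ℕ) : ModalForm :=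
  ModalForm.and (ModalForm.var p)
    (ModalForm.box (ModalForm.or (ModalForm.box (ModalForm.not (ModalForm.var p))) (ModalForm.var p)))

/-- `□(p ∨ q ∨ □¬q)` -/
def PsiF (p q : ℕ) : ModalForm :=
  ModalForm.box (ModalForm.or (ModalForm.var p)
    (ModalForm.or (ModalForm.var q) (ModalForm.box (ModalForm.not (ModalForm.var q)))))


namespace Stmt19Aux

open ModalForm

/-- valuation making `PhiF p` true at world 0 of `LS12Frame`. -/
def V1 (p : ℕ) : Fin 3 → ℕ → Prop := fun w r => r = p ∧ w.val ≤ 1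

/-- valuation making `PsiF p q` false at world 0 of `LS12Frame`. -/
def V2 (p q : ℕ) : Fin 3 → ℕ → Prop :=
  fun w r => (r = p ∧ w = 0) ∨ (r = q ∧ w = 2)

/-- directed simulation relation -/
def Zrel : Fin 3 → Fin 3 → Prop :=
  fun x y => (x = 0 ∧ y = 0) ∨ (x = 1 ∧ y = 0) ∨ x = 2

lemma zforth : ∀ x y x' : Fin 3,
    ((x = 0 ∧ y = 0) ∨ (x = 1 ∧ y = 0) ∨ x = 2) → (x = x' ∨ x.val ≤ 1) →
    ∃ y', (y = y' ∨ y.val ≤ 1) ∧ ((x' = 0 ∧ y' = 0) ∨ (x' = 1 ∧ y' = 0) ∨ x' = 2) := by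
  decide

lemma zback : ∀ x y y' : Fin 3,
    ((x = 0 ∧ y = 0) ∨ (x = 1 ∧ y = 0) ∨ x = 2) → (y = y' ∨ y.val ≤ 1) →
    ∃ x', (x = x' ∨ x.val ≤ 1) ∧ ((x' = 0 ∧ y' = 0) ∨ (x' = 1 ∧ y' = 0) ∨ x' = 2) := by
  decide

lemma zatom : ∀ x y : Fin 3,
    ((x = 0 ∧ y = 0) ∨ (x = 1 ∧ y = 0) ∨ x = 2) → x.val ≤ 1 → y = 0 := by
  decide

/-- Key transfer lemma: positive formulas in `p` transfer along `Zrel` from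
`(M1, x)` to `(M2, y)`, and negative ones backwards. -/
lemma transfer (p q : ℕ) (θ : ModalForm) : ∀ x y : Fin 3, Zrel x y →
    (θ.vpos ⊆ {p} → θ.vneg ⊆ (∅ : Finset ℕ) →
      (LS12Frame.toModel (V1 p)).Sat x θ → (LS12Frame.toModel (V2 p q)).Sat y θ) ∧
    (θ.vpos ⊆ (∅ : Finset ℕ) → θ.vneg ⊆ {p} →
      (LS12Frame.toModel (V2 p q)).Sat y θ → (LS12Frame.toModel (V1 p)).Sat x θ) := by
  induction θ with
  | var r =>
    intro x y hz
    constructor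
    · intro hp _ hs
      simp only [ModalForm.vpos, Finset.singleton_subset_iff,
        Finset.mem_singleton] at hp
      obtain ⟨-, hx⟩ : r = p ∧ x.val ≤ 1 := hs
      exact (Or.inl ⟨hp, zatom x y hz hx⟩ :
        (r = p ∧ y = 0) ∨ (r = q ∧ y = (2 : Fin 3)))
    · intro hp _ _
      simp [ModalForm.vpos] at hp
  | bot =>
    intro x y hz
    exact ⟨fun _ _ hs => hs, fun _ _ hs => hs⟩
  | and φ ψ ihφ ihψ =>
    intro x y hz
    simp only [ModalForm.vpos, ModalForm.vneg, Finset.union_subset_iff, KModel.Sat]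
    exact ⟨fun hp hm hs => ⟨(ihφ x y hz).1 hp.1 hm.1 hs.1, (ihψ x y hz).1 hp.2 hm.2 hs.2⟩,
      fun hp hm hs => ⟨(ihφ x y hz).2 hp.1 hm.1 hs.1, (ihψ x y hz).2 hp.2 hm.2 hs.2⟩⟩
  | or φ ψ ihφ ihψ =>
    intro x y hz
    simp only [ModalForm.vpos, ModalForm.vneg, Finset.union_subset_iff, KModel.Sat]
    exact ⟨fun hp hm hs => hs.elim (fun h => Or.inl ((ihφ x y hz).1 hp.1 hm.1 h))
        (fun h => Or.inr ((ihψ x y hz).1 hp.2 hm.2 h)),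
      fun hp hm hs => hs.elim (fun h => Or.inl ((ihφ x y hz).2 hp.1 hm.1 h))
        (fun h => Or.inr ((ihψ x y hz).2 hp.2 hm.2 h))⟩
  | not φ ihφ =>
    intro x y hz
    simp only [ModalForm.vpos, ModalForm.vneg, KModel.Sat]
    exact ⟨fun hp hm hs hc => hs ((ihφ x y hz).2 hm hp hc),
      fun hp hm hs hc => hs ((ihφ x y hz).1 hm hp hc)⟩
  | imp φ ψ ihφ ihψ =>
    intro x y hz
    simp only [ModalForm.vpos, ModalForm.vneg, Finset.union_subset_iff, KModel.Sat]
    exact ⟨fun hp hm hs hc => (ihψ x y hz).1 hp.2 hm.2 (hs ((ihφ x y hz).2 hm.1 hp.1 hc)),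
      fun hp hm hs hc => (ihψ x y hz).2 hp.2 hm.2 (hs ((ihφ x y hz).1 hm.1 hp.1 hc))⟩
  | box φ ihφ =>
    intro x y hz
    simp only [ModalForm.vpos, ModalForm.vneg]
    constructor
    · intro hp hm hs y' hyy'
      obtain ⟨x', hxx', hz'⟩ := zback x y y' hz hyy'
      exact (ihφ x' y' hz').1 hp hm (hs x' hxx')
    · intro hp hm hs x' hxx'
      obtain ⟨y', hyy', hz'⟩ := zforth x y x' hz hxx'
      exact (ihφ x' y' hz').2 hp hm (hs y' hyy')

lemma phi_sat (p : ℕ) : (LS12Frame.toModel (V1 p)).Sat (0 : Fin 3) (PhiF p) := by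
  have h2 : ∀ y : Fin 3, LS12Frame.R (0 : Fin 3) y →
      (LS12Frame.toModel (V1 p)).Sat y
        (((ModalForm.var p).not.box).or (ModalForm.var p)) := by
    intro y _
    by_cases hy1 : y.val ≤ 1
    · exact Or.inr (⟨rfl, hy1⟩ : p = p ∧ y.val ≤ 1)
    · refine Or.inl fun z hz hc => ?_
      obtain ⟨-, hzl⟩ : p = p ∧ z.val ≤ 1 := hc
      rcases hz with rfl | h
      · exact hy1 hzl
      · exact hy1 h
  exact ⟨⟨rfl, Nat.zero_le 1⟩, h2⟩

lemma psi_not_sat (p q : ℕ) (hpq : p ≠ q) :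
    ¬ (LS12Frame.toModel (V2 p q)).Sat (0 : Fin 3) (PsiF p q) := by
  intro hs
  have h1 := hs (1 : Fin 3) (Or.inr (by norm_num))
  rcases h1 with h | h | h
  · rcases h with ⟨_, h⟩ | ⟨h, _⟩
    · exact absurd h (by decide)
    · exact hpq h
  · rcases h with ⟨h, _⟩ | ⟨_, h⟩
    · exact hpq h.symm
    · exact absurd h (by decide)
  · exact h (2 : Fin 3) (Or.inr (by norm_num)) (Or.inr ⟨rfl, rfl⟩)

lemma valid_imp (p q : ℕ) : ∀ Fr ∈ CFail, ∀ (V : Fr.W → ℕ → Prop) (w : Fr.W),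
    (Fr.toModel V).Sat w ((PhiF p).imp (PsiF p q)) := by
  rintro Fr ⟨_, I, F, _, _, hdisj, hcover, hR⟩ V w hφ
  obtain ⟨hwp, hbox⟩ := hφ
  intro y hwy
  rcases hcover y with hyI | hyF
  · -- y inner: show p holds at y
    refine Or.inl ?_
    rcases hbox y hwy with hnb | hyp
    · exfalso
      have hwI : w ∈ I := by
        rcases (hR w y).1 hwy with rfl | ⟨h, _⟩ | ⟨h, _⟩
        · exact hyI
        · exact h
        · exact h
      exact hnb w ((hR y w).2 (Or.inr (Or.inl ⟨hyI, hwI⟩))) hwp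
    · exact hyp
  · -- y final: q or box not q
    refine Or.inr ?_
    by_cases hq : V y q
    · exact Or.inl hq
    · refine Or.inr ?_
      intro z hyz
      rcases (hR y z).1 hyz with rfl | ⟨h, _⟩ | ⟨h, _⟩
      · exact hq
      · exact absurd h (Set.disjoint_right.1 hdisj hyF)
      · exact absurd h (Set.disjoint_right.1 hdisj hyF)

lemma vpos_phi (p : ℕ) : (PhiF p).vpos = {p} := by
  simp [PhiF, ModalForm.vpos, ModalForm.vneg]

lemma vneg_phi (p : ℕ) : (PhiF p).vneg = {p} := by
  simp [PhiF, ModalForm.vpos, ModalForm.vneg]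

lemma vneg_psi (p q : ℕ) : (PsiF p q).vneg = {q} := by
  simp [PsiF, ModalForm.vpos, ModalForm.vneg]

end Stmt19Aux

theorem stmt19 (p q : ℕ) (hpq : p ≠ q) (L : Set ModalForm)
    (hsound : ∀ φ : ModalForm,
      (∀ Fr ∈ CFail, ∀ (V : Fr.W → ℕ → Prop) (w : Fr.W), (Fr.toModel V).Sat w φ) → φ ∈ L)
    (hcomplete : ∀ φ ∈ L, ∀ (V : LS12Frame.W → ℕ → Prop) (w : LS12Frame.W),
      (LS12Frame.toModel V).Sat w φ) :
    (¬ ∀ φ ψ : ModalForm, (φ.imp ψ) ∈ L →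
        ∃ θ : ModalForm, θ.vpos ⊆ φ.vpos ∩ ψ.vpos ∧ θ.vneg ⊆ φ.vneg ∩ ψ.vneg ∧
          (φ.imp θ) ∈ L ∧ (θ.imp ψ) ∈ L) ∧
    ((PhiF p).imp (PsiF p q)) ∈ L ∧
    ¬ ∃ θ : ModalForm,
        θ.vpos ⊆ (PhiF p).vpos ∩ (PsiF p q).vpos ∧
        θ.vneg ⊆ (PhiF p).vneg ∩ (PsiF p q).vneg ∧
        ((PhiF p).imp θ) ∈ L ∧ (θ.imp (PsiF p q)) ∈ L := by
  have hmem : ((PhiF p).imp (PsiF p q)) ∈ L := hsound _ (Stmt19Aux.valid_imp p q)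
  have hno : ¬ ∃ θ : ModalForm,
      θ.vpos ⊆ (PhiF p).vpos ∩ (PsiF p q).vpos ∧
      θ.vneg ⊆ (PhiF p).vneg ∩ (PsiF p q).vneg ∧
      ((PhiF p).imp θ) ∈ L ∧ (θ.imp (PsiF p q)) ∈ L := by
    rintro ⟨θ, hvp, hvm, h1, h2⟩
    have hθp : θ.vpos ⊆ {p} := by
      rw [Stmt19Aux.vpos_phi] at hvp
      exact fun a ha => (Finset.mem_inter.1 (hvp ha)).1
    have hθm : θ.vneg ⊆ (∅ : Finset ℕ) := by
      rw [Stmt19Aux.vneg_phi, Stmt19Aux.vneg_psi] at hvm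
      intro a ha
      have := Finset.mem_inter.1 (hvm ha)
      simp at this
      exact absurd (this.1.symm.trans this.2) hpq
    have hθ1 : (LS12Frame.toModel (Stmt19Aux.V1 p)).Sat (0 : Fin 3) θ :=
      hcomplete _ h1 (Stmt19Aux.V1 p) (0 : Fin 3) (Stmt19Aux.phi_sat p)
    have hθ2 : (LS12Frame.toModel (Stmt19Aux.V2 p q)).Sat (0 : Fin 3) θ :=
      (Stmt19Aux.transfer p q θ 0 0 (Or.inl ⟨rfl, rfl⟩)).1 hθp hθm hθ1
    exact Stmt19Aux.psi_not_sat p q hpq (hcomplete _ h2 (Stmt19Aux.V2 p q) (0 : Fin 3) hθ2)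
  refine ⟨?_, hmem, hno⟩
  intro hIP
  exact hno (hIP _ _ hmem)
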